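/- Let E and F be real vector spaces, T : E → F a linear map, and let K₁, K₂ : E → F be companions of T, i.e. finite-rank linear maps such that T + K₁ and T + K₂ are bijective. Then the four linear endomorphisms (T+K₂)⁻¹(T+K₁) and (T+K₁)(T+K₂)⁻¹ (of E and F respectively), and (T+K₁)⁻¹(T+K₂) and (T+K₂)(T+K₁)⁻¹ (of E and F respectively), are all admissible; the first two have equal determinants, the last two have equal determinants, and all four determinants have the same sign. -/

import Mathlib

/-- The determinant of an admissible endomorphism `S` (one with `range (id − S)`
finite-dimensional): the determinant of the restriction of `S` to any finite-dimensional
subspace containing `range (id − S)`, here the minimal one. -/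
noncomputable def admDet {E : Type*} [AddCommGroup E] [Module ℝ E] (S : E →ₗ[ℝ] E) : ℝ :=
  LinearMap.det (S.restrict
    (p := LinearMap.range ((LinearMap.id : E →ₗ[ℝ] E) - S))
    (q := LinearMap.range ((LinearMap.id : E →ₗ[ℝ] E) - S))
    (fun x hx => by
      have h1 : ((LinearMap.id : E →ₗ[ℝ] E) - S) x ∈
          LinearMap.range ((LinearMap.id : E →ₗ[ℝ] E) - S) :=
        LinearMap.mem_range_self _ x
      have h2 : S x = x - ((LinearMap.id : E →ₗ[ℝ] E) - S) x := by
        simp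
      rw [h2]
      exact Submodule.sub_mem _ hx h1))

open Classical in
/-- Inverse of a bijective linear map (junk value `0` otherwise). -/
noncomputable def linInv {E F : Type*} [AddCommGroup E] [Module ℝ E] [AddCommGroup F] [Module ℝ F]
    (f : E →ₗ[ℝ] F) : F →ₗ[ℝ] E :=
  if h : Function.Bijective ⇑f then ((LinearEquiv.ofBijective f h).symm : F →ₗ[ℝ] E) else 0

section Aux

open LinearMap

/-- Determinant of a "block upper-triangular" endomorphism of a product, with identity in the
lower-right block. -/
lemma admAux_det_triangular {P Q : Type*} [AddCommGroup P] [Module ℝ P] [AddCommGroup Q]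
    [Module ℝ Q] [FiniteDimensional ℝ P] [FiniteDimensional ℝ Q] (A : P →ₗ[ℝ] P)
    (φ : Q →ₗ[ℝ] P) :
    LinearMap.det (LinearMap.prod (A ∘ₗ LinearMap.fst ℝ P Q + φ ∘ₗ LinearMap.snd ℝ P Q)
      (LinearMap.snd ℝ P Q)) = LinearMap.det A := by
  classical
  let bp := Module.finBasis ℝ P
  let bq := Module.finBasis ℝ Q
  let b := bp.prod bq
  rw [← LinearMap.det_toMatrix b, ← LinearMap.det_toMatrix bp]
  have : (LinearMap.toMatrix b b) (LinearMap.prod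
      (A ∘ₗ LinearMap.fst ℝ P Q + φ ∘ₗ LinearMap.snd ℝ P Q) (LinearMap.snd ℝ P Q)) =
      Matrix.fromBlocks (LinearMap.toMatrix bp bp A) (LinearMap.toMatrix bq bp φ) 0 1 := by
    ext i j
    rcases i with i | i <;> rcases j with j | j <;>
      simp [b, LinearMap.toMatrix_apply, Module.Basis.prod_repr_inl, Module.Basis.prod_repr_inr,
        Module.Basis.prod_apply, Matrix.one_apply, Finsupp.single_apply, eq_comm]
  rw [this, Matrix.det_fromBlocks_zero₂₁, Matrix.det_one, mul_one]

/-- If `f` preserves `p` and `x - f x ∈ p` for all `x`, the determinant of `f` is that of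
its restriction to `p`. -/
lemma admAux_det_restrict {M : Type*} [AddCommGroup M] [Module ℝ M] [FiniteDimensional ℝ M]
    (f : M →ₗ[ℝ] M) (p : Submodule ℝ M) (hf : ∀ x ∈ p, f x ∈ p)
    (h : ∀ x : M, x - f x ∈ p) :
    LinearMap.det f = LinearMap.det (f.restrict hf) := by
  obtain ⟨q, hq⟩ := Submodule.exists_isCompl p
  set e := Submodule.prodEquivOfIsCompl p q hq with he
  set φ : q →ₗ[ℝ] p := LinearMap.codRestrict p ((f - LinearMap.id) ∘ₗ q.subtype)
    (fun y => by simpa using neg_mem (h (y : M))) with hφ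
  set g := LinearMap.prod ((f.restrict hf) ∘ₗ LinearMap.fst ℝ p q + φ ∘ₗ LinearMap.snd ℝ p q)
    (LinearMap.snd ℝ p q) with hg
  have key2 : f ∘ₗ (e : p × q →ₗ[ℝ] M) = (e : p × q →ₗ[ℝ] M) ∘ₗ g := by
    ext x
    · simp [g, e, Submodule.coe_prodEquivOfIsCompl', LinearMap.restrict_apply]
    · simp [g, e, φ, Submodule.coe_prodEquivOfIsCompl', LinearMap.restrict_apply]
  have key : f = (e : p × q →ₗ[ℝ] M) ∘ₗ g ∘ₗ (e.symm : M →ₗ[ℝ] p × q) := by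
    rw [← LinearMap.comp_assoc, ← key2, LinearMap.comp_assoc]
    ext x; simp
  conv_lhs => rw [key]
  rw [LinearMap.det_conj g e, admAux_det_triangular]

variable {E F : Type*} [AddCommGroup E] [Module ℝ E] [AddCommGroup F] [Module ℝ F]

lemma admAux_det_restrict_eq_of_le (S : E →ₗ[ℝ] E) {p q : Submodule ℝ E} [FiniteDimensional ℝ q]
    (hpq : p ≤ q) (hV : ∀ x : E, x - S x ∈ p) (hSp : ∀ x ∈ p, S x ∈ p)
    (hSq : ∀ x ∈ q, S x ∈ q) :
    LinearMap.det (S.restrict hSq) = LinearMap.det (S.restrict hSp) := by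
  set f := S.restrict hSq with hfdef
  have hf' : ∀ x ∈ p.comap q.subtype, f x ∈ p.comap q.subtype := by
    intro x hx
    exact hSp _ hx
  have h' : ∀ x : q, x - f x ∈ p.comap q.subtype := by
    intro x
    exact hV (x : E)
  rw [admAux_det_restrict f (p.comap q.subtype) hf' h']
  set eqv := Submodule.comapSubtypeEquivOfLe hpq with heqv
  have : S.restrict hSp = (eqv : p.comap q.subtype →ₗ[ℝ] p) ∘ₗ (f.restrict hf')
      ∘ₗ (eqv.symm : p →ₗ[ℝ] p.comap q.subtype) := by
    ext x
    simp [f, eqv, LinearMap.restrict_apply, Submodule.comapSubtypeEquivOfLe]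
  rw [this, LinearMap.det_conj]

/-- `admDet` equals the determinant of the restriction to any finite-dimensional invariant
subspace containing all `x - S x`. -/
lemma admDet_eq (S : E →ₗ[ℝ] E) (p : Submodule ℝ E) [FiniteDimensional ℝ p]
    (hV : ∀ x : E, x - S x ∈ p) (hSp : ∀ x ∈ p, S x ∈ p) :
    admDet S = LinearMap.det (S.restrict hSp) := by
  set V := LinearMap.range ((LinearMap.id : E →ₗ[ℝ] E) - S) with hVdef
  have hVp : V ≤ p := by rintro _ ⟨x, rfl⟩; simpa using hV x
  haveI : FiniteDimensional ℝ V := Submodule.finiteDimensional_of_le hVp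
  have hV' : ∀ x : E, x - S x ∈ V := fun x => ⟨x, by simp⟩
  have hSV : ∀ x ∈ V, S x ∈ V := fun x hx => by
    have h1 : x - S x ∈ V := hV' x
    simpa using sub_mem hx h1
  rw [admAux_det_restrict_eq_of_le S hVp hV' hSV hSp]
  rfl

lemma admAux_mem_of_sub {S : E →ₗ[ℝ] E} {p : Submodule ℝ E} (hV : ∀ x : E, x - S x ∈ p) :
    ∀ x ∈ p, S x ∈ p := fun x hx => by simpa using sub_mem hx (hV x)

lemma admDet_comp (S₁ S₂ : E →ₗ[ℝ] E) (p : Submodule ℝ E) [FiniteDimensional ℝ p]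
    (hV₁ : ∀ x : E, x - S₁ x ∈ p) (hV₂ : ∀ x : E, x - S₂ x ∈ p) :
    admDet (S₁ ∘ₗ S₂) = admDet S₁ * admDet S₂ := by
  have hV₁₂ : ∀ x : E, x - (S₁ ∘ₗ S₂) x ∈ p := fun x => by
    have := add_mem (hV₂ x) (hV₁ (S₂ x))
    simpa [sub_add_sub_cancel] using this
  rw [admDet_eq (S₁ ∘ₗ S₂) p hV₁₂ (admAux_mem_of_sub hV₁₂),
    admDet_eq S₁ p hV₁ (admAux_mem_of_sub hV₁), admDet_eq S₂ p hV₂ (admAux_mem_of_sub hV₂)]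
  have : (S₁ ∘ₗ S₂).restrict (admAux_mem_of_sub hV₁₂) =
      (S₁.restrict (admAux_mem_of_sub hV₁)) ∘ₗ (S₂.restrict (admAux_mem_of_sub hV₂)) := by
    ext x; simp [LinearMap.restrict_apply]
  rw [this, LinearMap.det_comp]

lemma admDet_id : admDet (LinearMap.id : E →ₗ[ℝ] E) = 1 := by
  rw [admDet_eq (LinearMap.id : E →ₗ[ℝ] E) ⊥ (fun x => by simp) (fun x hx => by simpa using hx)]
  have : (LinearMap.id : E →ₗ[ℝ] E).restrict
      (p := ⊥) (q := ⊥) (fun x hx => by simpa using hx) = LinearMap.id := rfl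
  rw [this]
  exact LinearMap.det_id

lemma admDet_conj (S : E →ₗ[ℝ] E) (e : E ≃ₗ[ℝ] F) (p : Submodule ℝ E) [FiniteDimensional ℝ p]
    (hV : ∀ x : E, x - S x ∈ p) :
    admDet ((e : E →ₗ[ℝ] F) ∘ₗ S ∘ₗ (e.symm : F →ₗ[ℝ] E)) = admDet S := by
  set q := p.map (e : E →ₗ[ℝ] F) with hq
  haveI : FiniteDimensional ℝ q := Module.Finite.map p (e : E →ₗ[ℝ] F)
  set S' := (e : E →ₗ[ℝ] F) ∘ₗ S ∘ₗ (e.symm : F →ₗ[ℝ] E) with hS'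
  have hVq : ∀ y : F, y - S' y ∈ q := by
    intro y
    have : y - S' y = e (e.symm y - S (e.symm y)) := by
      simp [S', map_sub]
    rw [this]
    exact Submodule.mem_map_of_mem (hV (e.symm y))
  rw [admDet_eq S' q hVq (admAux_mem_of_sub hVq), admDet_eq S p hV (admAux_mem_of_sub hV)]
  set eqv := e.submoduleMap p with heqv
  have : S'.restrict (admAux_mem_of_sub hVq) =
      (eqv : p →ₗ[ℝ] q) ∘ₗ (S.restrict (admAux_mem_of_sub hV)) ∘ₗ (eqv.symm : q →ₗ[ℝ] p) := by
    ext y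
    have h1 : ((eqv.symm : q →ₗ[ℝ] p) y : E) = e.symm (y : F) := by
      simp [eqv, LinearEquiv.submoduleMap_symm_apply]
    simp only [LinearMap.coe_comp, Function.comp_apply, LinearMap.restrict_apply]
    conv_rhs => rw [heqv]
    simp only [S', LinearEquiv.submoduleMap_apply, LinearMap.coe_comp, LinearEquiv.coe_coe,
      Function.comp_apply]
    rfl
  rw [this, LinearMap.det_conj]

lemma admAux_fin_range (S : E →ₗ[ℝ] E) (p : Submodule ℝ E) [FiniteDimensional ℝ p]
    (hV : ∀ x : E, x - S x ∈ p) :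
    FiniteDimensional ℝ (LinearMap.range ((LinearMap.id : E →ₗ[ℝ] E) - S)) :=
  Submodule.finiteDimensional_of_le (by rintro _ ⟨x, rfl⟩; simpa using hV x)

lemma admAux_sign_eq {x y : ℝ} (h : x * y = 1) : Real.sign x = Real.sign y := by
  rcases lt_trichotomy x 0 with hx | hx | hx
  · have hy : y < 0 := by nlinarith
    rw [Real.sign_of_neg hx, Real.sign_of_neg hy]
  · exfalso; rw [hx] at h; simp at h
  · have hy : 0 < y := by nlinarith
    rw [Real.sign_of_pos hx, Real.sign_of_pos hy]

end Aux

theorem companions_four_determinants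
    {E F : Type*} [AddCommGroup E] [Module ℝ E] [AddCommGroup F] [Module ℝ F]
    (T K₁ K₂ : E →ₗ[ℝ] F)
    (hr₁ : FiniteDimensional ℝ (LinearMap.range K₁))
    (hr₂ : FiniteDimensional ℝ (LinearMap.range K₂))
    (hb₁ : Function.Bijective ⇑(T + K₁)) (hb₂ : Function.Bijective ⇑(T + K₂)) :
    FiniteDimensional ℝ (LinearMap.range
      ((LinearMap.id : E →ₗ[ℝ] E) - linInv (T + K₂) ∘ₗ (T + K₁))) ∧
    FiniteDimensional ℝ (LinearMap.range
      ((LinearMap.id : F →ₗ[ℝ] F) - (T + K₁) ∘ₗ linInv (T + K₂))) ∧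
    FiniteDimensional ℝ (LinearMap.range
      ((LinearMap.id : E →ₗ[ℝ] E) - linInv (T + K₁) ∘ₗ (T + K₂))) ∧
    FiniteDimensional ℝ (LinearMap.range
      ((LinearMap.id : F →ₗ[ℝ] F) - (T + K₂) ∘ₗ linInv (T + K₁))) ∧
    admDet (linInv (T + K₂) ∘ₗ (T + K₁)) = admDet ((T + K₁) ∘ₗ linInv (T + K₂)) ∧
    admDet (linInv (T + K₁) ∘ₗ (T + K₂)) = admDet ((T + K₂) ∘ₗ linInv (T + K₁)) ∧
    Real.sign (admDet (linInv (T + K₂) ∘ₗ (T + K₁))) =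
      Real.sign (admDet (linInv (T + K₁) ∘ₗ (T + K₂))) := by
  set A := T + K₁ with hAdef
  set B := T + K₂ with hBdef
  set eA := LinearEquiv.ofBijective A hb₁ with heA
  set eB := LinearEquiv.ofBijective B hb₂ with heB
  have hlA : linInv A = (eA.symm : F →ₗ[ℝ] E) := dif_pos hb₁
  have hlB : linInv B = (eB.symm : F →ₗ[ℝ] E) := dif_pos hb₂
  -- pointwise inverse identities
  have hAA : ∀ x : E, linInv A (A x) = x := fun x => by
    rw [hlA]; exact eA.symm_apply_apply x
  have hAA' : ∀ y : F, A (linInv A y) = y := fun y => by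
    rw [hlA]; exact eA.apply_symm_apply y
  have hBB : ∀ x : E, linInv B (B x) = x := fun x => by
    rw [hlB]; exact eB.symm_apply_apply x
  have hBB' : ∀ y : F, B (linInv B y) = y := fun y => by
    rw [hlB]; exact eB.apply_symm_apply y
  -- the finite-dimensional subspace W of F
  set W : Submodule ℝ F := LinearMap.range K₁ ⊔ LinearMap.range K₂ with hW
  haveI : FiniteDimensional ℝ W := Submodule.finiteDimensional_sup _ _
  have hABW : ∀ x : E, B x - A x ∈ W := fun x => by
    have h1 : B x - A x = K₂ x - K₁ x := by
      simp [hAdef, hBdef]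
    rw [h1]
    exact sub_mem (Submodule.mem_sup_right (LinearMap.mem_range_self _ _))
      (Submodule.mem_sup_left (LinearMap.mem_range_self _ _))
  -- the finite-dimensional subspace pE of E
  set pE : Submodule ℝ E := W.map (linInv A) ⊔ W.map (linInv B) with hpE
  haveI : FiniteDimensional ℝ (W.map (linInv A)) := Module.Finite.map _ _
  haveI : FiniteDimensional ℝ (W.map (linInv B)) := Module.Finite.map _ _
  haveI : FiniteDimensional ℝ pE := Submodule.finiteDimensional_sup _ _
  have hV₁ : ∀ x : E, x - (linInv B ∘ₗ A) x ∈ pE := fun x => by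
    have h0 : x - (linInv B ∘ₗ A) x = linInv B (B x - A x) := by
      simp only [LinearMap.coe_comp, Function.comp_apply]
      rw [map_sub, hBB x]
    rw [h0]
    exact Submodule.mem_sup_right (Submodule.mem_map_of_mem (hABW x))
  have hV₂ : ∀ x : E, x - (linInv A ∘ₗ B) x ∈ pE := fun x => by
    have h0 : x - (linInv A ∘ₗ B) x = linInv A (-(B x - A x)) := by
      simp only [LinearMap.coe_comp, Function.comp_apply]
      rw [map_neg, map_sub, hAA x]
      abel
    rw [h0]
    exact Submodule.mem_sup_left (Submodule.mem_map_of_mem (neg_mem (hABW x)))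
  have hV₃ : ∀ y : F, y - (A ∘ₗ linInv B) y ∈ W := fun y => by
    have h0 : y - (A ∘ₗ linInv B) y = B (linInv B y) - A (linInv B y) := by
      simp only [LinearMap.coe_comp, Function.comp_apply]
      rw [hBB' y]
    rw [h0]
    exact hABW (linInv B y)
  have hV₄ : ∀ y : F, y - (B ∘ₗ linInv A) y ∈ W := fun y => by
    have h0 : y - (B ∘ₗ linInv A) y = -(B (linInv A y) - A (linInv A y)) := by
      simp only [LinearMap.coe_comp, Function.comp_apply]
      rw [hAA' y]
      abel
    rw [h0]
    exact neg_mem (hABW (linInv A y))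
  -- determinant equalities via conjugation
  have hconjB : (eB : E →ₗ[ℝ] F) ∘ₗ (linInv B ∘ₗ A) ∘ₗ (eB.symm : F →ₗ[ℝ] E) =
      A ∘ₗ linInv B := by
    rw [← hlB]
    ext y
    show B (linInv B (A (linInv B y))) = A (linInv B y)
    rw [hBB']
  have hconjA : (eA : E →ₗ[ℝ] F) ∘ₗ (linInv A ∘ₗ B) ∘ₗ (eA.symm : F →ₗ[ℝ] E) =
      B ∘ₗ linInv A := by
    rw [← hlA]
    ext y
    show A (linInv A (B (linInv A y))) = B (linInv A y)
    rw [hAA']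
  have eq₁ : admDet (linInv B ∘ₗ A) = admDet (A ∘ₗ linInv B) := by
    have := admDet_conj (linInv B ∘ₗ A) eB pE hV₁
    rw [hconjB] at this
    exact this.symm
  have eq₂ : admDet (linInv A ∘ₗ B) = admDet (B ∘ₗ linInv A) := by
    have := admDet_conj (linInv A ∘ₗ B) eA pE hV₂
    rw [hconjA] at this
    exact this.symm
  -- product of the two E-side determinants is 1
  have hcomp : (linInv B ∘ₗ A) ∘ₗ (linInv A ∘ₗ B) = LinearMap.id := by
    ext x
    simp only [LinearMap.coe_comp, Function.comp_apply, LinearMap.id_coe, id_eq]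
    rw [hAA', hBB]
  have hprod : admDet (linInv B ∘ₗ A) * admDet (linInv A ∘ₗ B) = 1 := by
    rw [← admDet_comp _ _ pE hV₁ hV₂, hcomp, admDet_id]
  exact ⟨admAux_fin_range _ pE hV₁, admAux_fin_range _ W hV₃, admAux_fin_range _ pE hV₂,
    admAux_fin_range _ W hV₄, eq₁, eq₂, admAux_sign_eq hprod⟩
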